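/- (Theorem 5, part 1.) Consider a compound geometrically uniform state set with linearly independent states and equal prior probabilities η_{g,k} = 1/(|G|·r). Let S denote the positive semidefinite square root of the Gram matrix ΦᴴΦ and let q be the number of distinct eigenvalues of ΦᴴΦ. If there exist real constants a_1,…,a_q such that for every generator index k and every 1 ≤ t ≤ q the diagonal entry of S^t at the index (e,k) equals a_t (independent of k), where e is the identity of G — equivalently, ⟨ψ_k, (ΦΦᴴ)^{t/2−1} ψ_k⟩ = a_t for all k, t — then the equal-probability measurement is optimal: the constant vector p = λ_min is primal feasible, and (1/(|G|·r))·Σ_{g,k} p_{g,k} ≤ λ_min for every primal feasible p, where λ_min is the smallest eigenvalue of ΦᴴΦ. -/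

import Mathlib

open Matrix BigOperators ComplexOrder

set_option maxHeartbeats 1000000

noncomputable section

section CguAux

variable {ι : Type*} [Fintype ι] [DecidableEq ι]

lemma cgu_diag_nonneg {M : Matrix ι ι ℂ} (hM : M.PosSemidef) (i : ι) : 0 ≤ M i i := by
  have h := hM.dotProduct_mulVec_nonneg (Pi.single i 1)
  have h2 : star (Pi.single i 1 : ι → ℂ) ⬝ᵥ (M *ᵥ Pi.single i 1) = M i i := by
    simp [dotProduct, mulVec, Pi.single_apply, apply_ite (star : ℂ → ℂ), mul_comm]
  rwa [h2] at h

lemma cgu_trace_nonneg {M : Matrix ι ι ℂ} (hM : M.PosSemidef) : 0 ≤ M.trace := by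
  have : M.trace = ∑ i, M i i := rfl
  rw [this]
  exact Finset.sum_nonneg fun i _ => cgu_diag_nonneg hM i

lemma cgu_trace_mul_nonneg {A P : Matrix ι ι ℂ} (hA : A.PosSemidef) (hP : P.PosSemidef)
    (hidem : P * P = P) : 0 ≤ (A * P).trace := by
  have h1 : (Pᴴ * A * P).PosSemidef := hA.conjTranspose_mul_mul_same P
  have h2 : (Pᴴ * A * P).trace = (A * P).trace := by
    rw [hP.1, Matrix.trace_mul_cycle, hidem, Matrix.trace_mul_comm]
  rw [← h2]
  exact cgu_trace_nonneg h1

lemma cgu_conj_mul (U : Matrix ι ι ℂ) (hU1 : star U * U = 1) (d1 d2 : ι → ℂ) :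
    (U * diagonal d1 * star U) * (U * diagonal d2 * star U)
      = U * diagonal (fun i => d1 i * d2 i) * star U := by
  rw [← Matrix.diagonal_mul_diagonal]
  calc (U * diagonal d1 * star U) * (U * diagonal d2 * star U)
      = U * diagonal d1 * ((star U * U) * (diagonal d2 * star U)) := by
        simp only [Matrix.mul_assoc]
    _ = U * (diagonal d1 * diagonal d2) * star U := by
        rw [hU1, Matrix.one_mul]; simp only [Matrix.mul_assoc]

lemma cgu_conj_pow (U : Matrix ι ι ℂ) (hU1 : star U * U = 1) (hU2 : U * star U = 1)
    (d : ι → ℂ) (t : ℕ) :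
    (U * diagonal d * star U) ^ t = U * diagonal (fun i => d i ^ t) * star U := by
  induction t with
  | zero => simp [pow_zero, Matrix.diagonal_one, hU2]
  | succ t ih =>
      rw [pow_succ, ih, cgu_conj_mul U hU1]
      congr 1

lemma cgu_conj_sum (U : Matrix ι ι ℂ) (hU1 : star U * U = 1) (hU2 : U * star U = 1)
    (c : ℕ → ℂ) (d : ι → ℂ) (m : ℕ) :
    ∑ t ∈ Finset.range m, c t • (U * diagonal d * star U) ^ t
      = U * diagonal (fun i => ∑ t ∈ Finset.range m, c t * d i ^ t) * star U := by
  have h1 : ∀ t, c t • (U * diagonal d * star U) ^ t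
      = U * diagonal (fun i => c t * d i ^ t) * star U := by
    intro t
    rw [cgu_conj_pow U hU1 hU2]
    have : (fun i => c t * d i ^ t) = c t • (fun i => d i ^ t) := by
      funext i; simp [smul_eq_mul]
    rw [this, Matrix.diagonal_smul, mul_smul_comm, smul_mul_assoc]
  simp only [h1]
  rw [← Finset.sum_mul, ← Finset.mul_sum]
  congr 2
  ext i j
  by_cases hij : i = j <;>
    simp [Matrix.diagonal_apply, hij, Matrix.sum_apply, Finset.sum_apply]

omit [Fintype ι] [DecidableEq ι] in
lemma cgu_conj_vecMulVec {m : Type*} [Fintype m] (A : Matrix m ι ℂ) (u v : m → ℂ) :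
    Aᴴ * vecMulVec u (fun b => star (v b)) * A
      = vecMulVec (Aᴴ *ᵥ u) (fun y => star ((Aᴴ *ᵥ v) y)) := by
  ext x y
  simp only [Matrix.mul_apply, Matrix.vecMulVec_apply, Matrix.conjTranspose_apply,
    Matrix.mulVec, dotProduct, star_sum, star_mul', star_star]
  rw [Finset.sum_mul_sum]
  rw [Finset.sum_comm]
  apply Finset.sum_congr rfl; intro b _
  rw [Finset.sum_mul]
  apply Finset.sum_congr rfl; intro a _
  ring

open scoped MatrixOrder Matrix.Norms.L2Operator in
lemma cgu_eq_of_sq_eq_sq {A B : Matrix ι ι ℂ} (hA : A.PosSemidef) (hB : B.PosSemidef)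
    (h : A ^ 2 = B ^ 2) : A = B :=
  (CFC.sq_eq_sq_iff A B hA.nonneg hB.nonneg).mp h

end CguAux

/-- The matrix whose column indexed by `(g, k)` is the CGU state `ρ(g) ψ_k`. -/
def cguMatrix {G : Type*} [Group G] [Fintype G] (n r : ℕ)
    (ρ : G →* Matrix.unitaryGroup (Fin n) ℂ) (ψ : Fin r → Fin n → ℂ) :
    Matrix (Fin n) (G × Fin r) ℂ :=
  Matrix.of fun j gk => ((ρ gk.1 : Matrix (Fin n) (Fin n) ℂ).mulVec (ψ gk.2)) j

/-- The reciprocal states: columns of `Φ (ΦᴴΦ)⁻¹`. -/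
def cguReciprocal {G : Type*} [Group G] [Fintype G] [DecidableEq G] (n r : ℕ)
    (ρ : G →* Matrix.unitaryGroup (Fin n) ℂ) (ψ : Fin r → Fin n → ℂ) :
    Matrix (Fin n) (G × Fin r) ℂ :=
  cguMatrix n r ρ ψ * ((cguMatrix n r ρ ψ)ᴴ * cguMatrix n r ρ ψ)⁻¹

/-- The rank-one operator `Q_{g,k} = φ̃_{g,k} φ̃_{g,k}ᴴ`. -/
def cguQop {G : Type*} [Group G] [Fintype G] [DecidableEq G] (n r : ℕ)
    (ρ : G →* Matrix.unitaryGroup (Fin n) ℂ) (ψ : Fin r → Fin n → ℂ) (gk : G × Fin r) :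
    Matrix (Fin n) (Fin n) ℂ :=
  vecMulVec (fun a => cguReciprocal n r ρ ψ a gk) (fun b => star (cguReciprocal n r ρ ψ b gk))

/-- Primal feasibility for the CGU unambiguous-discrimination SDP. -/
def cguPrimalFeasible {G : Type*} [Group G] [Fintype G] [DecidableEq G] (n r : ℕ)
    (ρ : G →* Matrix.unitaryGroup (Fin n) ℂ) (ψ : Fin r → Fin n → ℂ)
    (p : G × Fin r → ℝ) : Prop :=
  (∀ gk, 0 ≤ p gk) ∧
    ((1 : Matrix (Fin n) (Fin n) ℂ) -
      ∑ gk : G × Fin r, (p gk : ℂ) • cguQop n r ρ ψ gk).PosSemidef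

theorem stmt_18 {G : Type*} [Group G] [Fintype G] [DecidableEq G] (n r : ℕ) (hr : 0 < r)
    (ρ : G →* Matrix.unitaryGroup (Fin n) ℂ) (ψ : Fin r → Fin n → ℂ)
    (hind : LinearIndependent ℂ (fun gk : G × Fin r =>
      (ρ gk.1 : Matrix (Fin n) (Fin n) ℂ).mulVec (ψ gk.2)))
    (lam : ℝ)
    -- `lam` is the smallest eigenvalue of the Gram matrix `ΦᴴΦ`:
    (hev : ∃ u : G × Fin r → ℂ, u ≠ 0 ∧
      ((cguMatrix n r ρ ψ)ᴴ * cguMatrix n r ρ ψ).mulVec u = (lam : ℂ) • u)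
    (hmin : (((cguMatrix n r ρ ψ)ᴴ * cguMatrix n r ρ ψ) - (lam : ℂ) • 1).PosSemidef)
    -- `S` is the positive semidefinite square root of the Gram matrix:
    (S : Matrix (G × Fin r) (G × Fin r) ℂ) (hS : S.PosSemidef)
    (hSsq : S * S = (cguMatrix n r ρ ψ)ᴴ * cguMatrix n r ρ ψ)
    -- `q` is the number of distinct eigenvalues of the Gram matrix:
    (q : ℕ) (hq : q = (spectrum ℂ ((cguMatrix n r ρ ψ)ᴴ * cguMatrix n r ρ ψ)).ncard)
    (a : Fin q → ℝ)
    -- the diagonal entries of `S^t` at generator indices are independent of `k`: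
    (ha : ∀ (k : Fin r) (t : Fin q),
      (S ^ (t.1 + 1)) ((1 : G), k) ((1 : G), k) = ((a t : ℝ) : ℂ)) :
    cguPrimalFeasible n r ρ ψ (fun _ => lam) ∧
      ∀ p : G × Fin r → ℝ, cguPrimalFeasible n r ρ ψ p →
        (1 / ((Fintype.card G : ℝ) * r)) * ∑ gk : G × Fin r, p gk ≤ lam := by
  classical
  set Φ : Matrix (Fin n) (G × Fin r) ℂ := cguMatrix n r ρ ψ with hΦdef
  set Γ : Matrix (G × Fin r) (G × Fin r) ℂ := Φᴴ * Φ with hΓdef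
  -- injectivity of Φ *ᵥ ·
  have hinj : ∀ x : (G × Fin r) → ℂ, Φ *ᵥ x = 0 → x = 0 := by
    intro x hx
    have h2 := Fintype.linearIndependent_iff.mp hind x ?_
    · funext i; exact h2 i
    · funext j
      have := congr_fun hx j
      simpa [Finset.sum_apply, mulVec, dotProduct, hΦdef, cguMatrix, mul_comm] using this
  have hΓpd : Γ.PosDef := by
    refine Matrix.PosDef.of_dotProduct_mulVec_pos (posSemidef_conjTranspose_mul_self Φ).1 (fun x hx => ?_)
    have key : star x ⬝ᵥ (Γ *ᵥ x) = star (Φ *ᵥ x) ⬝ᵥ (Φ *ᵥ x) := by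
      rw [hΓdef, ← Matrix.mulVec_mulVec, Matrix.dotProduct_mulVec, ← Matrix.star_mulVec]
    rw [key]
    exact Matrix.dotProduct_star_self_pos_iff.2 (fun h => hx (hinj x h))
  have hdet : IsUnit Γ.det := (Matrix.isUnit_iff_isUnit_det Γ).1 hΓpd.isUnit
  have hGi : Γ * Γ⁻¹ = 1 := Matrix.mul_nonsing_inv Γ hdet
  have hiG : Γ⁻¹ * Γ = 1 := Matrix.nonsing_inv_mul Γ hdet
  have hΓH : Γᴴ = Γ := hΓpd.isHermitian
  have hiH : (Γ⁻¹)ᴴ = Γ⁻¹ := by rw [Matrix.conjTranspose_nonsing_inv, hΓH]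
  have hRdef : cguReciprocal n r ρ ψ = Φ * Γ⁻¹ := rfl
  have hrecip : Φᴴ * (Φ * Γ⁻¹) = 1 := by rw [← Matrix.mul_assoc, ← hΓdef, hGi]
  -- lam > 0
  obtain ⟨u, hu0, huev⟩ := hev
  have hlam0 : (0:ℝ) < lam := by
    have h1 : 0 < star u ⬝ᵥ (Γ *ᵥ u) := hΓpd.dotProduct_mulVec_pos hu0
    have hupos : 0 < star u ⬝ᵥ u := Matrix.dotProduct_star_self_pos_iff.2 hu0
    rw [huev, dotProduct_smul] at h1
    rw [Complex.lt_def] at h1 hupos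
    simp only [smul_eq_mul, Complex.mul_re, Complex.mul_im, Complex.ofReal_re,
      Complex.ofReal_im, Complex.zero_re, Complex.zero_im, zero_mul, mul_zero,
      sub_zero, add_zero, zero_add, zero_sub, neg_zero] at h1 hupos
    by_contra hcon
    push_neg at hcon
    have hle : lam * (star u ⬝ᵥ u).re ≤ 0 :=
      mul_nonpos_of_nonpos_of_nonneg hcon (le_of_lt hupos.1)
    linarith [h1.1]
  refine ⟨⟨fun _ => le_of_lt hlam0, ?_⟩, ?_⟩
  · -- feasibility of the EPM
    have hRH : (Φ * Γ⁻¹)ᴴ = Γ⁻¹ * Φᴴ := by rw [Matrix.conjTranspose_mul, hiH]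
    have hQsum : ∑ gk : G × Fin r, ((lam:ℝ):ℂ) • cguQop n r ρ ψ gk
        = (lam:ℂ) • ((Φ * Γ⁻¹) * (Γ⁻¹ * Φᴴ)) := by
      rw [← Finset.smul_sum]
      congr 1
      rw [← hRH]
      ext x y
      simp only [cguQop, hRdef, Matrix.sum_apply, Matrix.vecMulVec_apply, Matrix.mul_apply,
        Matrix.conjTranspose_apply, mul_comm]
    set P : Matrix (Fin n) (Fin n) ℂ := Φ * Γ⁻¹ * Φᴴ with hPdef
    have hPH : Pᴴ = P := by
      rw [hPdef, Matrix.conjTranspose_mul, Matrix.conjTranspose_mul, hiH,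
        Matrix.conjTranspose_conjTranspose, ← Matrix.mul_assoc]
    have hPP : P * P = P := by
      rw [hPdef]
      calc Φ * Γ⁻¹ * Φᴴ * (Φ * Γ⁻¹ * Φᴴ) = Φ * Γ⁻¹ * ((Φᴴ * Φ) * Γ⁻¹) * Φᴴ := by
            simp only [Matrix.mul_assoc]
        _ = Φ * Γ⁻¹ * Φᴴ := by rw [← hΓdef, hGi, Matrix.mul_one]
    have e1 : (1 - P)ᴴ * (1 - P) = 1 - P := by
      rw [Matrix.conjTranspose_sub, Matrix.conjTranspose_one, hPH, Matrix.mul_sub,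
        Matrix.mul_one, Matrix.sub_mul, Matrix.one_mul, hPP]
      abel
    have e2 : (Γ⁻¹ * Φᴴ)ᴴ * (Γ - (lam:ℂ) • 1) * (Γ⁻¹ * Φᴴ)
        = P - (lam:ℂ) • ((Φ * Γ⁻¹) * (Γ⁻¹ * Φᴴ)) := by
      rw [Matrix.conjTranspose_mul, hiH, Matrix.conjTranspose_conjTranspose]
      rw [Matrix.mul_sub, Matrix.sub_mul]
      congr 1
      · rw [Matrix.mul_assoc Φ Γ⁻¹ Γ, hiG, Matrix.mul_one, ← Matrix.mul_assoc]
      · rw [Matrix.mul_smul, Matrix.mul_one, Matrix.smul_mul]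
    have hkey : (1 : Matrix (Fin n) (Fin n) ℂ)
          - ∑ gk : G × Fin r, ((lam:ℝ):ℂ) • cguQop n r ρ ψ gk
        = (1 - P)ᴴ * (1 - P) + (Γ⁻¹ * Φᴴ)ᴴ * (Γ - (lam:ℂ) • 1) * (Γ⁻¹ * Φᴴ) := by
      rw [hQsum, e1, e2, sub_add_sub_cancel]
    exact hkey ▸ ((posSemidef_conjTranspose_mul_self (1-P)).add
      (hmin.conjTranspose_mul_mul_same (Γ⁻¹ * Φᴴ)))

  · intro p hp
    obtain ⟨hp0, hpsd⟩ := hp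
    haveI : Nonempty (G × Fin r) := ⟨((1:G), ⟨0, hr⟩)⟩
    -- Gram minus diagonal is PSD
    have hQconj : ∀ gk : G × Fin r, Φᴴ * cguQop n r ρ ψ gk * Φ
        = vecMulVec (fun x => (1 : Matrix (G × Fin r) (G × Fin r) ℂ) x gk)
            (fun y => star ((1 : Matrix (G × Fin r) (G × Fin r) ℂ) y gk)) := by
      intro gk
      have h2 : Φᴴ *ᵥ (fun a => cguReciprocal n r ρ ψ a gk)
          = fun x => (1 : Matrix (G × Fin r) (G × Fin r) ℂ) x gk := by
        funext x
        have h3 : (Φᴴ *ᵥ fun a => cguReciprocal n r ρ ψ a gk) x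
            = (Φᴴ * cguReciprocal n r ρ ψ) x gk := by
          simp [Matrix.mulVec, Matrix.mul_apply, dotProduct]
        rw [h3, hRdef, hrecip]
      calc Φᴴ * cguQop n r ρ ψ gk * Φ
          = vecMulVec (Φᴴ *ᵥ fun a => cguReciprocal n r ρ ψ a gk)
              (fun y => star ((Φᴴ *ᵥ fun b => cguReciprocal n r ρ ψ b gk) y)) :=
            cgu_conj_vecMulVec Φ _ _
        _ = _ := by rw [h2]
    have hdiagsum : Φᴴ * (∑ gk : G × Fin r, (p gk : ℂ) • cguQop n r ρ ψ gk) * Φ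
        = Matrix.diagonal (fun gk => (p gk : ℂ)) := by
      have h1 : Φᴴ * (∑ gk : G × Fin r, (p gk:ℂ) • cguQop n r ρ ψ gk) * Φ
          = ∑ gk : G × Fin r, (p gk:ℂ) • (Φᴴ * cguQop n r ρ ψ gk * Φ) := by
        rw [Matrix.mul_sum, Matrix.sum_mul]
        apply Finset.sum_congr rfl; intro gk _
        rw [Matrix.mul_smul, Matrix.smul_mul]
      rw [h1]
      ext x y
      simp only [hQconj, Matrix.sum_apply, Matrix.smul_apply, Matrix.vecMulVec_apply,
        Matrix.one_apply, smul_eq_mul, apply_ite (star : ℂ → ℂ), star_one, star_zero,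
        mul_ite, ite_mul, mul_one, mul_zero, one_mul, zero_mul]
      by_cases hxy : x = y
      · subst hxy
        rw [Matrix.diagonal_apply_eq]
        rw [Finset.sum_congr rfl (fun gk _ => by
          rw [show (if x = gk then if x = gk then (p gk:ℂ) else 0 else 0)
              = (if x = gk then (p gk:ℂ) else 0) from by by_cases h : x = gk <;> simp [h]])]
        simp [Finset.sum_ite_eq]
      · rw [Matrix.diagonal_apply_ne _ hxy]
        apply Finset.sum_eq_zero
        intro gk _
        by_cases h1 : x = gk
        · subst h1
          have h2 : ¬ (y = x) := fun h => hxy h.symm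
          simp [h2]
        · simp [h1]
    have hGd : (Γ - Matrix.diagonal (fun gk => (p gk : ℂ))).PosSemidef := by
      have h1 := hpsd.conjTranspose_mul_mul_same Φ
      have h2 : Φᴴ * ((1 : Matrix (Fin n) (Fin n) ℂ)
            - ∑ gk : G × Fin r, (p gk : ℂ) • cguQop n r ρ ψ gk) * Φ
          = Γ - Matrix.diagonal (fun gk => (p gk : ℂ)) := by
        rw [Matrix.mul_sub, Matrix.sub_mul, Matrix.mul_one, hdiagsum, ← hΓdef]
      rw [← h2]; exact h1
    -- spectral setup
    have hA : S.IsHermitian := hS.1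
    set U : Matrix (G × Fin r) (G × Fin r) ℂ :=
      (hA.eigenvectorUnitary : Matrix (G × Fin r) (G × Fin r) ℂ) with hUdef
    set e : (G × Fin r) → ℝ := hA.eigenvalues with hedef
    have hU1 : star U * U = 1 := Unitary.coe_star_mul_self hA.eigenvectorUnitary
    have hU2 : U * star U = 1 := Unitary.coe_mul_star_self hA.eigenvectorUnitary
    have hspec : S = U * Matrix.diagonal (fun i => ((e i : ℝ) : ℂ)) * star U :=
      hA.spectral_theorem
    set dsq : (G × Fin r) → ℂ := fun i => ((e i : ℝ) : ℂ)^2 with hdsqdef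
    have hΓspec : Γ = U * Matrix.diagonal dsq * star U := by
      rw [← hSsq, hspec, cgu_conj_mul U hU1]
      have hdd : (fun i => ((e i:ℝ):ℂ) * ((e i:ℝ):ℂ)) = dsq := by
        funext i
        simp only [hdsqdef]
        exact (pow_two _).symm
      rw [hdd]
    have hepos : ∀ i, 0 ≤ e i := hS.eigenvalues_nonneg
    -- spectrum and q
    have hspecset : spectrum ℂ Γ = Set.range dsq := by
      rw [hΓspec]
      have h := Unitary.spectrum_star_right_conjugate (R := ℂ)
        (a := Matrix.diagonal dsq) (U := hA.eigenvectorUnitary)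
      calc spectrum ℂ (U * Matrix.diagonal dsq * star U)
          = spectrum ℂ (Matrix.diagonal dsq) := h
        _ = Set.range dsq := spectrum_diagonal dsq
    have hq' : q = (Finset.univ.image dsq).card := by
      have himg : Set.range dsq = ↑(Finset.univ.image dsq) := by
        simp [Finset.coe_image]
      rw [hq, hspecset, himg, Set.ncard_coe_finset]
    set T : Finset ℂ := Finset.univ.image (fun i : G × Fin r => ((e i : ℝ) : ℂ)) with hTdef
    have hTq : T.card = q := by
      rw [hq']
      have himg2 : Finset.univ.image dsq = T.image (fun z => z^2) := by
        rw [hTdef, Finset.image_image]; rfl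
      have hinj2 : Set.InjOn (fun z : ℂ => z^2) ↑T := by
        intro x hx y hy hxy
        obtain ⟨i, -, rfl⟩ := Finset.mem_image.mp (Finset.mem_coe.mp hx)
        obtain ⟨j, -, rfl⟩ := Finset.mem_image.mp (Finset.mem_coe.mp hy)
        simp only at hxy
        have hsq : (e i)^2 = (e j)^2 := by exact_mod_cast hxy
        have h1 : e i = e j := by nlinarith [hepos i, hepos j]
        rw [h1]
      rw [himg2, Finset.card_image_of_injOn hinj2]
    have hq1 : 1 ≤ q := by
      rw [← hTq]
      exact Finset.card_pos.mpr ⟨_, Finset.mem_image_of_mem _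
        (Finset.mem_univ ((1:G), (⟨0, hr⟩ : Fin r)))⟩
    -- interpolation polynomial
    set vf : ℂ → ℂ := fun z => if z^2 = (lam:ℂ) then 1 else 0 with hvfdef
    set f : Polynomial ℂ := Lagrange.interpolate T id vf with hfdef
    have hdeg : f.natDegree < q := by
      have h1 := Lagrange.degree_interpolate_lt (s := T) (v := id) vf
        Function.injective_id.injOn
      rw [hTq] at h1
      by_cases hf : f = 0
      · rw [hf, Polynomial.natDegree_zero]; omega
      · exact (Polynomial.natDegree_lt_iff_degree_lt hf).mpr (by exact_mod_cast h1)
    set dInd : (G × Fin r) → ℂ := fun i => vf ((e i : ℝ) : ℂ) with hdInddef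
    have hfeval : ∀ i : G × Fin r, f.eval ((e i : ℝ) : ℂ) = dInd i := by
      intro i
      have h1 := Lagrange.eval_interpolate_at_node vf (Function.injective_id.injOn : Set.InjOn id (↑T : Set ℂ))
        (Finset.mem_image_of_mem (fun i : G × Fin r => ((e i : ℝ):ℂ)) (Finset.mem_univ i))
      exact h1
    set Pr : Matrix (G × Fin r) (G × Fin r) ℂ := U * Matrix.diagonal dInd * star U with hPrdef
    have hrep : Pr = ∑ t ∈ Finset.range q, f.coeff t • S ^ t := by
      calc Pr = U * Matrix.diagonal
            (fun i => ∑ t ∈ Finset.range q, f.coeff t * ((e i:ℝ):ℂ)^t) * star U := by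
            have hdd2 : dInd = fun i => ∑ t ∈ Finset.range q, f.coeff t * ((e i:ℝ):ℂ)^t := by
              funext i
              rw [← hfeval i, Polynomial.eval_eq_sum_range' hdeg]
            rw [hPrdef, hdd2]
        _ = ∑ t ∈ Finset.range q, f.coeff t •
              (U * Matrix.diagonal (fun i => ((e i:ℝ):ℂ)) * star U) ^ t :=
            (cgu_conj_sum U hU1 hU2 _ _ q).symm
        _ = ∑ t ∈ Finset.range q, f.coeff t • S ^ t := by rw [← hspec]
    have hPrPSD : Pr.PosSemidef := by
      have hd : (Matrix.diagonal dInd).PosSemidef := by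
        refine Matrix.PosSemidef.diagonal (fun i => ?_)
        rw [show dInd i = if ((e i:ℝ):ℂ)^2 = (lam:ℂ) then (1:ℂ) else 0 from rfl]
        split
        · exact zero_le_one
        · exact le_rfl
      rw [hPrdef, Matrix.star_eq_conjTranspose]
      exact hd.mul_mul_conjTranspose_same U
    have hPrIdem : Pr * Pr = Pr := by
      rw [hPrdef, cgu_conj_mul U hU1]
      have hdd3 : (fun i => dInd i * dInd i) = dInd := by
        funext i
        rw [show dInd i = if ((e i:ℝ):ℂ)^2 = (lam:ℂ) then (1:ℂ) else 0 from rfl]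
        split <;> simp
      rw [hdd3]
    have hΓPr : Γ * Pr = (lam:ℂ) • Pr := by
      rw [hΓspec, hPrdef, cgu_conj_mul U hU1]
      have h1 : (fun i => dsq i * dInd i) = fun i => (lam:ℂ) * dInd i := by
        funext i
        rw [show dInd i = if ((e i:ℝ):ℂ)^2 = (lam:ℂ) then (1:ℂ) else 0 from rfl,
          show dsq i = ((e i:ℝ):ℂ)^2 from rfl]
        by_cases h : (((e i:ℝ):ℂ))^2 = (lam:ℂ)
        · simp [h]
        · simp [h]
      rw [h1]
      rw [show Matrix.diagonal (fun i => (lam:ℂ) * dInd i)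
          = (lam:ℂ) • Matrix.diagonal dInd from by
        rw [← Matrix.diagonal_smul]; rfl]
      rw [Matrix.mul_smul, Matrix.smul_mul]
    -- trace of Pr
    set msetC := Finset.univ.filter (fun i : G × Fin r => dsq i = (lam:ℂ)) with hmset
    set m := msetC.card with hmdef
    have htrPr : Pr.trace = (m : ℂ) := by
      rw [hPrdef, Matrix.trace_mul_cycle, hU1, Matrix.one_mul, Matrix.trace_diagonal]
      rw [hmdef, hmset]
      simp only [show ∀ i : G × Fin r, dInd i = if dsq i = (lam:ℂ) then (1:ℂ) else 0 from
        fun i => rfl]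
      simp [Finset.sum_boole]
    have hm1 : 1 ≤ m := by
      by_contra hcon
      push_neg at hcon
      have hempty : ∀ i : G × Fin r, dsq i ≠ (lam:ℂ) := by
        intro i hi
        have h1 : i ∈ msetC := by
          rw [hmset]; exact Finset.mem_filter.mpr ⟨Finset.mem_univ i, hi⟩
        have h2 : 0 < m := by rw [hmdef]; exact Finset.card_pos.mpr ⟨i, h1⟩
        omega
      have hsub : Γ - (lam:ℂ) • 1
          = U * Matrix.diagonal (fun i => dsq i - (lam:ℂ)) * star U := by
        have h1 : (lam:ℂ) • (1 : Matrix (G × Fin r) (G × Fin r) ℂ)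
            = U * Matrix.diagonal (fun _ : G × Fin r => (lam:ℂ)) * star U := by
          rw [show (fun _ : G × Fin r => (lam:ℂ)) = (lam:ℂ) • (fun _ : G × Fin r => (1:ℂ))
              from funext fun _ => by simp,
            Matrix.diagonal_smul, Matrix.diagonal_one, Matrix.mul_smul, Matrix.mul_one,
            Matrix.smul_mul, hU2]
        rw [hΓspec, h1, ← Matrix.sub_mul, ← Matrix.mul_sub, Matrix.diagonal_sub]
      have hz : (Γ - (lam:ℂ) • 1) *ᵥ u = 0 := by
        rw [Matrix.sub_mulVec, huev, Matrix.smul_mulVec, Matrix.one_mulVec, sub_self]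
      have h3 : Matrix.diagonal (fun i => dsq i - (lam:ℂ)) *ᵥ (star U *ᵥ u) = 0 := by
        have h4 : (U * Matrix.diagonal (fun i => dsq i - (lam:ℂ)) * star U) *ᵥ u = 0 := by
          rw [← hsub]; exact hz
        have h5 : star U *ᵥ ((U * Matrix.diagonal (fun i => dsq i - (lam:ℂ)) * star U) *ᵥ u)
            = Matrix.diagonal (fun i => dsq i - (lam:ℂ)) *ᵥ (star U *ᵥ u) := by
          rw [Matrix.mulVec_mulVec, ← Matrix.mul_assoc, ← Matrix.mul_assoc, hU1,
            Matrix.one_mul, ← Matrix.mulVec_mulVec]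
        rw [← h5, h4, Matrix.mulVec_zero]
      have hw0 : star U *ᵥ u = 0 := by
        funext i
        have h6 := congr_fun h3 i
        rw [Matrix.mulVec_diagonal] at h6
        have h7 : dsq i - (lam:ℂ) ≠ 0 := sub_ne_zero.mpr (hempty i)
        exact (mul_eq_zero.mp h6).resolve_left h7
      apply hu0
      have h8 : u = U *ᵥ (star U *ᵥ u) := by
        rw [Matrix.mulVec_mulVec, hU2, Matrix.one_mulVec]
      rw [h8, hw0, Matrix.mulVec_zero]
    -- constant diagonal of Pr
    have hentry : ∀ x : G × Fin r,
        Pr x x = ∑ t ∈ Finset.range q, f.coeff t * (S ^ t) x x := by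
      intro x
      rw [hrep]
      simp [Matrix.sum_apply, smul_eq_mul]
    have hdiagk : ∀ k k' : Fin r,
        Pr ((1:G),k) ((1:G),k) = Pr ((1:G),k') ((1:G),k') := by
      intro k k'
      rw [hentry, hentry]
      apply Finset.sum_congr rfl
      intro t ht
      rcases t with _ | t'
      · rw [pow_zero]
        simp [Matrix.one_apply]
      · have ht' : t' < q := by
          have := Finset.mem_range.mp ht; omega
        rw [ha k ⟨t', ht'⟩, ha k' ⟨t', ht'⟩]
    have hshift : ∀ (g : G) (k : Fin r), Pr (g, k) (g, k) = Pr ((1:G), k) ((1:G), k) := by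
      intro g k
      set σ : (G × Fin r) ≃ (G × Fin r) :=
        (Equiv.mulLeft g).prodCongr (Equiv.refl (Fin r)) with hσdef
      have form : ∀ a b : G × Fin r, Γ a b
          = star ((ρ a.1 : Matrix (Fin n) (Fin n) ℂ) *ᵥ ψ a.2) ⬝ᵥ
            ((ρ b.1 : Matrix (Fin n) (Fin n) ℂ) *ᵥ ψ b.2) := by
        intro a b
        simp [hΓdef, hΦdef, cguMatrix, Matrix.mul_apply, Matrix.conjTranspose_apply,
          dotProduct]
      have hmulv : ∀ (h1 : G) (v : Fin n → ℂ),
          (ρ (g * h1) : Matrix (Fin n) (Fin n) ℂ) *ᵥ v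
            = (ρ g : Matrix (Fin n) (Fin n) ℂ) *ᵥ ((ρ h1 : Matrix (Fin n) (Fin n) ℂ) *ᵥ v) := by
        intro h1 v
        have hx : ρ (g * h1) = ρ g * ρ h1 := map_mul ρ g h1
        rw [hx, Matrix.mulVec_mulVec]
        rfl
      have hUinv : ∀ (v w : Fin n → ℂ),
          star ((ρ g : Matrix (Fin n) (Fin n) ℂ) *ᵥ v) ⬝ᵥ
            ((ρ g : Matrix (Fin n) (Fin n) ℂ) *ᵥ w) = star v ⬝ᵥ w := by
        intro v w
        have hg : ((ρ g : Matrix (Fin n) (Fin n) ℂ))ᴴ * (ρ g : Matrix (Fin n) (Fin n) ℂ)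
            = 1 := by
          rw [← Matrix.star_eq_conjTranspose]
          exact (ρ g).2.1
        rw [Matrix.star_mulVec, ← Matrix.dotProduct_mulVec, Matrix.mulVec_mulVec, hg,
          Matrix.one_mulVec]
      have hΓsub : Γ.submatrix σ σ = Γ := by
        ext x y
        rw [Matrix.submatrix_apply]
        have hσx : σ x = (g * x.1, x.2) := rfl
        have hσy : σ y = (g * y.1, y.2) := rfl
        rw [hσx, hσy, form, form]
        simp only
        rw [hmulv, hmulv, hUinv]
      have hSsub : S.submatrix σ σ = S := by
        apply cgu_eq_of_sq_eq_sq (hS.submatrix σ) hS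
        rw [pow_two, pow_two, Matrix.submatrix_mul_equiv, hSsq]
        exact hΓsub
      have hPow : ∀ t : ℕ, (S ^ t).submatrix σ σ = S ^ t := by
        intro t
        induction t with
        | zero => rw [pow_zero]; exact Matrix.submatrix_one_equiv σ
        | succ t ih =>
            calc (S^(t+1)).submatrix σ σ = ((S^t) * S).submatrix σ σ := by rw [pow_succ]
              _ = (S^t).submatrix σ σ * S.submatrix σ σ :=
                  (Matrix.submatrix_mul_equiv _ _ _ _ _).symm
              _ = S^t * S := by rw [ih, hSsub]
              _ = S^(t+1) := (pow_succ S t).symm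
      have hPrsub : Pr.submatrix σ σ = Pr := by
        rw [hrep]
        have hsplit : (∑ t ∈ Finset.range q, f.coeff t • S ^ t).submatrix ⇑σ ⇑σ
            = ∑ t ∈ Finset.range q, f.coeff t • (S ^ t).submatrix ⇑σ ⇑σ := by
          ext x y
          simp [Matrix.submatrix_apply, Matrix.sum_apply]
        rw [hsplit]
        simp only [hPow]
      calc Pr (g,k) (g,k) = Pr.submatrix σ σ ((1:G), k) ((1:G), k) := by
            rw [Matrix.submatrix_apply]
            have : σ ((1:G), k) = (g, k) := by
              show (g * 1, k) = (g, k)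
              rw [mul_one]
            rw [this]
        _ = Pr ((1:G),k) ((1:G),k) := by rw [hPrsub]
    have hconst : ∀ x : G × Fin r,
        Pr x x = Pr ((1:G), (⟨0,hr⟩ : Fin r)) ((1:G), ⟨0,hr⟩) := by
      intro x
      calc Pr x x = Pr (x.1, x.2) (x.1, x.2) := by simp
        _ = Pr ((1:G), x.2) ((1:G), x.2) := hshift x.1 x.2
        _ = _ := hdiagk x.2 ⟨0,hr⟩
    set c0 : ℂ := Pr ((1:G), (⟨0,hr⟩ : Fin r)) ((1:G), ⟨0,hr⟩) with hc0def
    have hNc : (Fintype.card (G × Fin r) : ℂ) * c0 = (m : ℂ) := by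
      have htr : Pr.trace = ∑ i : G × Fin r, Pr i i := rfl
      rw [← htrPr, htr, Finset.sum_congr rfl (fun i _ => hconst i), Finset.sum_const,
        Finset.card_univ, nsmul_eq_mul]
    -- final inequality
    have htr1 : 0 ≤ ((Γ - Matrix.diagonal (fun gk => (p gk:ℂ))) * Pr).trace :=
      cgu_trace_mul_nonneg hGd hPrPSD hPrIdem
    have htr2 : ((Γ - Matrix.diagonal (fun gk => (p gk:ℂ))) * Pr).trace
        = (lam:ℂ) * (m:ℂ) - (∑ gk : G × Fin r, (p gk : ℂ)) * c0 := by
      rw [Matrix.sub_mul, Matrix.trace_sub, hΓPr, Matrix.trace_smul, htrPr, smul_eq_mul]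
      congr 1
      have hdm : (Matrix.diagonal (fun gk => (p gk:ℂ)) * Pr).trace
          = ∑ i : G × Fin r, (p i:ℂ) * Pr i i := by
        have htr : (Matrix.diagonal (fun gk => (p gk:ℂ)) * Pr).trace
            = ∑ i : G × Fin r, (Matrix.diagonal (fun gk => (p gk:ℂ)) * Pr) i i := rfl
        rw [htr]
        exact Finset.sum_congr rfl fun i _ => by rw [Matrix.diagonal_mul]
      rw [hdm, Finset.sum_congr rfl (fun i _ => by rw [hconst i]), ← Finset.sum_mul]
    set N : ℝ := (Fintype.card G : ℝ) * r with hNdef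
    have hcardN : (Fintype.card (G × Fin r) : ℝ) = N := by
      rw [hNdef]; simp [Fintype.card_prod]
    have hNpos : 0 < N := by
      rw [hNdef]
      exact mul_pos (by exact_mod_cast Fintype.card_pos) (by exact_mod_cast hr)
    have hcard0 : ((Fintype.card (G × Fin r) : ℝ)) ≠ 0 := by
      rw [hcardN]; exact ne_of_gt hNpos
    have hc0real : c0 = (((m:ℝ)/N : ℝ) : ℂ) := by
      have h9 : c0 = (m : ℂ) / (Fintype.card (G × Fin r) : ℂ) := by
        rw [← hNc]
        field_simp
      rw [h9]
      push_cast [← hcardN]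
      ring
    set Sp : ℝ := ∑ gk : G × Fin r, p gk with hSpdef
    have hSpc : (∑ gk : G × Fin r, (p gk : ℂ)) = ((Sp : ℝ) : ℂ) := by
      rw [hSpdef]; push_cast; ring
    rw [htr2, hSpc, hc0real] at htr1
    have htr3 : (0:ℂ) ≤ (((lam * m - Sp * ((m:ℝ)/N)) : ℝ) : ℂ) := by
      convert htr1 using 1
      push_cast
      ring
    have hfin : 0 ≤ lam * m - Sp * ((m:ℝ)/N) := Complex.zero_le_real.mp htr3
    have hm' : (1:ℝ) ≤ (m:ℝ) := by exact_mod_cast hm1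
    have h8 : 0 ≤ lam - Sp/N := by
      by_contra hcon
      push_neg at hcon
      have hmR : (0:ℝ) < (m:ℝ) := by linarith
      have hneg : (m:ℝ) * (lam - Sp/N) < 0 := mul_neg_of_pos_of_neg hmR hcon
      have heq : lam * m - Sp * ((m:ℝ)/N) = (m:ℝ) * (lam - Sp/N) := by ring
      linarith [hfin]
    have h10 : 1/N * Sp = Sp / N := by ring
    linarith [h8, h10]

end
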